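/- Lemma on moments of the inverted errors (Lemma A.3 of the paper, part 1): In the TMA(1) setup, almost surely, for every t ∈ ℤ and every θ ∈ Θ the series Σ_{j=1}^∞ |∏_{i=1}^{j} A_{t−i}(θ)| · |X_{t−j}| converges (so ε_t(θ) is well defined), and for every real d ≥ 1 and every t ∈ ℤ, E[ sup_{θ∈Θ} |ε_t(θ)|^d ] < ∞. -/

import Mathlib

open MeasureTheory ProbabilityTheory ENNReal

lemma aux_jensen_finset (s : Finset ℕ) (w z : ℕ → ℝ≥0∞) (hw : ∑ j ∈ s, w j ≤ 1)
    {d : ℝ} (hd : 1 ≤ d) :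
    (∑ j ∈ s, w j * z j) ^ d ≤ ∑ j ∈ s, w j * z j ^ d := by
  have hd0 : (0:ℝ) < d := lt_of_lt_of_le one_pos hd
  set W := ∑ j ∈ s, w j with hW
  by_cases hW0 : W = 0
  · have hz : ∀ j ∈ s, w j = 0 := by
      intro j hj
      exact (Finset.sum_eq_zero_iff.mp (hW ▸ hW0)) j hj
    have : ∑ j ∈ s, w j * z j = 0 := Finset.sum_eq_zero fun j hj => by rw [hz j hj, zero_mul]
    rw [this, ENNReal.zero_rpow_of_pos hd0]
    exact zero_le
  · have hWtop : W ≠ ⊤ := (hw.trans_lt ENNReal.one_lt_top).ne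
    set w' := fun j => w j * W⁻¹ with hw'
    have hw'1 : ∑ j ∈ s, w' j = 1 := by
      rw [hw', ← Finset.sum_mul, ← hW, ENNReal.mul_inv_cancel hW0 hWtop]
    have key := ENNReal.rpow_arith_mean_le_arith_mean_rpow s w' z hw'1 hd
    have hfac : ∀ y : ℕ → ℝ≥0∞, ∑ j ∈ s, w j * y j = W * ∑ j ∈ s, w' j * y j := by
      intro y
      rw [Finset.mul_sum]
      refine Finset.sum_congr rfl fun j hj => ?_
      rw [hw']
      calc w j * y j = (W * W⁻¹) * (w j * y j) := by
            rw [ENNReal.mul_inv_cancel hW0 hWtop, one_mul]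
        _ = W * (w j * W⁻¹ * y j) := by ring
    have hWd : W ^ d = W ^ (d - 1) * W := by
      nth_rewrite 3 [← ENNReal.rpow_one W]
      rw [← ENNReal.rpow_add _ _ hW0 hWtop, sub_add_cancel]
    calc (∑ j ∈ s, w j * z j) ^ d = (W * ∑ j ∈ s, w' j * z j) ^ d := by rw [hfac]
      _ = W ^ d * (∑ j ∈ s, w' j * z j) ^ d := ENNReal.mul_rpow_of_nonneg _ _ hd0.le
      _ ≤ W ^ d * ∑ j ∈ s, w' j * z j ^ d := mul_le_mul_right key _
      _ = W ^ (d - 1) * W * ∑ j ∈ s, w' j * z j ^ d := by rw [hWd]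
      _ = W ^ (d - 1) * (W * ∑ j ∈ s, w' j * z j ^ d) := by rw [mul_assoc]
      _ = W ^ (d - 1) * ∑ j ∈ s, w j * z j ^ d := by rw [← hfac]
      _ ≤ 1 * ∑ j ∈ s, w j * z j ^ d :=
          mul_le_mul_left (ENNReal.rpow_le_one hw (by linarith)) _
      _ = _ := one_mul _

lemma aux_jensen_tsum (w z : ℕ → ℝ≥0∞) (hw : ∑' j, w j ≤ 1) {d : ℝ} (hd : 1 ≤ d) :
    (∑' j, w j * z j) ^ d ≤ ∑' j, w j * z j ^ d := by
  have hd0 : (0:ℝ) < d := lt_of_lt_of_le one_pos hd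
  rw [ENNReal.tsum_eq_iSup_sum (f := fun j => w j * z j)]
  have hmap : (⨆ s : Finset ℕ, ∑ j ∈ s, w j * z j) ^ d
      = ⨆ s : Finset ℕ, (∑ j ∈ s, w j * z j) ^ d :=
    map_iSup (ENNReal.orderIsoRpow d hd0) _
  rw [hmap]
  refine iSup_le fun s => ?_
  refine (aux_jensen_finset s w z ((ENNReal.sum_le_tsum s).trans hw) hd).trans ?_
  exact ENNReal.sum_le_tsum s

lemma aux_gauss_exp (a : ℝ) :
    ∫⁻ x, ENNReal.ofReal (Real.exp (a * x)) ∂(gaussianReal 0 1) < ⊤ := by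
  rw [gaussianReal_of_var_ne_zero 0 one_ne_zero]
  rw [lintegral_withDensity_eq_lintegral_mul _ (measurable_gaussianPDF 0 1)
    (by fun_prop)]
  have hfun : ∀ x : ℝ, (gaussianPDF 0 1 * fun x => ENNReal.ofReal (Real.exp (a * x))) x
      = ENNReal.ofReal ((Real.sqrt (2 * Real.pi))⁻¹ * Real.exp (a ^ 2 / 2)
          * Real.exp (-(1/2) * (x - a) ^ 2)) := by
    intro x
    simp only [Pi.mul_apply, gaussianPDF, gaussianPDFReal]
    rw [← ENNReal.ofReal_mul (by positivity)]
    congr 1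
    push_cast
    simp only [mul_one, sub_zero]
    rw [mul_assoc, ← Real.exp_add, mul_assoc, ← Real.exp_add]
    congr 2
    ring
  simp only [hfun]
  refine Integrable.lintegral_lt_top ?_
  exact ((integrable_exp_neg_mul_sq (by norm_num : (0:ℝ) < 1/2)).comp_sub_right a).const_mul _

lemma aux_gauss_moment {d : ℝ} (hd : 0 ≤ d) :
    ∫⁻ x, ENNReal.ofReal (|x| ^ d) ∂(gaussianReal 0 1) < ⊤ := by
  have hb : ∀ x : ℝ, ENNReal.ofReal (|x| ^ d)
      ≤ ENNReal.ofReal (Real.exp (d * x)) + ENNReal.ofReal (Real.exp (-d * x)) := by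
    intro x
    have hxe : |x| ≤ Real.exp |x| := by
      have := Real.add_one_le_exp |x|
      have := abs_nonneg x
      linarith
    have h1 : |x| ^ d ≤ Real.exp (d * |x|) := by
      calc |x| ^ d ≤ (Real.exp |x|) ^ d := Real.rpow_le_rpow (abs_nonneg x) hxe hd
        _ = Real.exp (|x| * d) := (Real.exp_mul _ _).symm
        _ = Real.exp (d * |x|) := by rw [mul_comm]
    have h2 : Real.exp (d * |x|) ≤ Real.exp (d * x) + Real.exp (-d * x) := by
      rcases abs_cases x with ⟨h, _⟩ | ⟨h, _⟩
      · rw [h]; exact le_add_of_nonneg_right (Real.exp_pos _).le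
      · rw [h]
        have : d * -x = -d * x := by ring
        rw [this]
        exact le_add_of_nonneg_left (Real.exp_pos _).le
    calc ENNReal.ofReal (|x| ^ d) ≤ ENNReal.ofReal (Real.exp (d * x) + Real.exp (-d * x)) :=
          ENNReal.ofReal_le_ofReal (h1.trans h2)
      _ ≤ _ := ENNReal.ofReal_add_le
  calc ∫⁻ x, ENNReal.ofReal (|x| ^ d) ∂(gaussianReal 0 1)
      ≤ ∫⁻ x, (ENNReal.ofReal (Real.exp (d * x)) + ENNReal.ofReal (Real.exp (-d * x)))
        ∂(gaussianReal 0 1) := lintegral_mono hb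
    _ = (∫⁻ x, ENNReal.ofReal (Real.exp (d * x)) ∂(gaussianReal 0 1))
        + ∫⁻ x, ENNReal.ofReal (Real.exp (-d * x)) ∂(gaussianReal 0 1) :=
          lintegral_add_left (by fun_prop) _
    _ < ⊤ := ENNReal.add_lt_top.mpr ⟨aux_gauss_exp d, aux_gauss_exp (-d)⟩

lemma aux_add_rpow {a b d : ℝ} (ha : 0 ≤ a) (hb : 0 ≤ b) (hd : 0 ≤ d) :
    (a + b) ^ d ≤ 2 ^ d * (a ^ d + b ^ d) := by
  have h1 : a + b ≤ 2 * max a b := by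
    rcases le_total a b with h | h
    · rw [max_eq_right h]; linarith
    · rw [max_eq_left h]; linarith
  have h2 : max a b ^ d ≤ a ^ d + b ^ d := by
    rcases le_total a b with h | h
    · rw [max_eq_right h]; exact le_add_of_nonneg_left (Real.rpow_nonneg ha d)
    · rw [max_eq_left h]; exact le_add_of_nonneg_right (Real.rpow_nonneg hb d)
  calc (a + b) ^ d ≤ (2 * max a b) ^ d :=
        Real.rpow_le_rpow (by positivity) h1 hd
    _ = 2 ^ d * max a b ^ d := Real.mul_rpow (by norm_num) (le_max_iff.mpr (Or.inl ha))
    _ ≤ 2 ^ d * (a ^ d + b ^ d) :=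
        mul_le_mul_of_nonneg_left h2 (Real.rpow_nonneg (by norm_num) d)



/-- TMA(1) parameter space `Θ = {(φ, ξ, σ²) : |φ| ≤ c₁, |φ+ξ| ≤ c₁, c₂ ≤ σ² ≤ c₃}`. -/
def tmaTheta (c₁ c₂ c₃ : ℝ) : Set (ℝ × ℝ × ℝ) :=
  {θ | |θ.1| ≤ c₁ ∧ |θ.1 + θ.2.1| ≤ c₁ ∧ c₂ ≤ θ.2.2 ∧ θ.2.2 ≤ c₃}

/-- Inversion coefficient `A_t(θ) = -(φ + ξ·1{X_t ≤ u})`. -/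
noncomputable def tmaA {Ω : Type*} (X : ℤ → Ω → ℝ) (u : ℝ) (θ : ℝ × ℝ × ℝ)
    (t : ℤ) (ω : Ω) : ℝ :=
  -(θ.1 + θ.2.1 * (if X t ω ≤ u then 1 else 0))

/-- Inverted error `ε_t(θ) = σ⁻¹(X_t + Σ_{j≥1} (∏_{i=1}^j A_{t−i}(θ)) X_{t−j})`, written as
`σ⁻¹ Σ_{j≥0} (∏_{i=1}^j A_{t−i}(θ)) X_{t−j}` (the `j = 0` term is `X_t`), `σ = √(σ²)`. -/
noncomputable def tmaEps {Ω : Type*} (X : ℤ → Ω → ℝ) (u : ℝ) (θ : ℝ × ℝ × ℝ)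
    (t : ℤ) (ω : Ω) : ℝ :=
  (Real.sqrt θ.2.2)⁻¹ *
    ∑' j : ℕ, (∏ i ∈ Finset.Icc 1 j, tmaA X u θ (t - (i : ℤ)) ω) * X (t - j) ω

/-- Lemma A.3, part 1: in the TMA(1) model with standard Gaussian innovations,
almost surely the series defining `ε_t(θ)` converges absolutely for every `t` and
every `θ ∈ Θ`, and for every `d ≥ 1` and `t`, `E[sup_{θ∈Θ} |ε_t(θ)|^d] < ∞`. -/
theorem stmt5 {Ω : Type*} [MeasurableSpace Ω] (P : Measure Ω) [IsProbabilityMeasure P]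
    (u c₁ c₂ c₃ : ℝ) (hc₁ : 0 < c₁) (hc₁' : c₁ < 1) (hc₂ : 0 < c₂) (hc₂₃ : c₂ ≤ c₃)
    (φ₀ ξ₀ s₀ : ℝ) (hθ₀ : (φ₀, ξ₀, s₀) ∈ tmaTheta c₁ c₂ c₃)
    (e X : ℤ → Ω → ℝ) (he : ∀ t, Measurable (e t)) (hX : ∀ t, Measurable (X t))
    (heG : ∀ t, P.map (e t) = gaussianReal 0 1)
    (hmodel : ∀ᵐ ω ∂P, ∀ t : ℤ, X t ω =
      (φ₀ + ξ₀ * (if X (t - 1) ω ≤ u then 1 else 0)) * Real.sqrt s₀ * e (t - 1) ω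
        + Real.sqrt s₀ * e t ω) :
    (∀ᵐ ω ∂P, ∀ t : ℤ, ∀ θ ∈ tmaTheta c₁ c₂ c₃,
        Summable (fun j : ℕ =>
          |∏ i ∈ Finset.Icc 1 j, tmaA X u θ (t - (i : ℤ)) ω| * |X (t - j) ω|)) ∧
    (∀ d : ℝ, 1 ≤ d → ∀ t : ℤ,
        ∫⁻ ω, ⨆ θ ∈ tmaTheta c₁ c₂ c₃, ENNReal.ofReal (|tmaEps X u θ t ω| ^ d) ∂P < ⊤) := by
  obtain ⟨hb1, hb2, hb3, hb4⟩ := hθ₀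
  -- bound on the coefficients A
  have hA : ∀ θ ∈ tmaTheta c₁ c₂ c₃, ∀ (s : ℤ) (ω : Ω), |tmaA X u θ s ω| ≤ c₁ := by
    rintro ⟨φ, ξ, v⟩ ⟨h1, h2, _, _⟩ s ω
    simp only [tmaA, abs_neg]
    split_ifs
    · simpa using h2
    · simpa using h1
  have hprod : ∀ θ ∈ tmaTheta c₁ c₂ c₃, ∀ (t : ℤ) (ω : Ω) (j : ℕ),
      |∏ i ∈ Finset.Icc 1 j, tmaA X u θ (t - (i:ℤ)) ω| ≤ c₁ ^ j := by
    intro θ hθ t ω j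
    rw [Finset.abs_prod]
    calc ∏ i ∈ Finset.Icc 1 j, |tmaA X u θ (t - (i:ℤ)) ω|
        ≤ ∏ i ∈ Finset.Icc 1 j, c₁ :=
          Finset.prod_le_prod (fun i _ => abs_nonneg _) (fun i _ => hA θ hθ _ ω)
      _ = c₁ ^ j := by rw [Finset.prod_const, Nat.card_Icc, Nat.add_sub_cancel]
  -- bound on X from the model
  have hXb : ∀ᵐ ω ∂P, ∀ s : ℤ,
      |X s ω| ≤ Real.sqrt c₃ * (|e (s - 1) ω| + |e s ω|) := by
    filter_upwards [hmodel] with ω hω s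
    have hs0 : Real.sqrt s₀ ≤ Real.sqrt c₃ := Real.sqrt_le_sqrt hb4
    have hsn : (0:ℝ) ≤ Real.sqrt s₀ := Real.sqrt_nonneg _
    have hcoef : |φ₀ + ξ₀ * (if X (s - 1) ω ≤ u then 1 else 0)| ≤ 1 := by
      split_ifs
      · simpa using hb2.trans hc₁'.le
      · simpa using hb1.trans hc₁'.le
    rw [hω s]
    refine (abs_add_le _ _).trans ?_
    rw [abs_mul, abs_mul, abs_mul, abs_of_nonneg hsn]
    have h1 : |φ₀ + ξ₀ * (if X (s - 1) ω ≤ u then 1 else 0)| * Real.sqrt s₀ * |e (s - 1) ω|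
        ≤ Real.sqrt c₃ * |e (s - 1) ω| := by
      have := mul_le_mul hcoef hs0 hsn zero_le_one
      have := abs_nonneg (e (s - 1) ω)
      nlinarith
    have h2 : Real.sqrt s₀ * |e s ω| ≤ Real.sqrt c₃ * |e s ω| :=
      mul_le_mul_of_nonneg_right hs0 (abs_nonneg _)
    nlinarith [abs_nonneg (e s ω), abs_nonneg (e (s-1) ω)]
  -- gaussian moments
  have hmom : ∀ (s : ℤ) (d : ℝ), 0 ≤ d →
      ∫⁻ ω, ENNReal.ofReal (|e s ω| ^ d) ∂P
        = ∫⁻ x, ENNReal.ofReal (|x| ^ d) ∂(gaussianReal 0 1) := by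
    intro s d hd
    rw [← heG s, lintegral_map (by fun_prop) (he s)]
  -- the dominating series
  set SE : ℤ → Ω → ℝ≥0∞ := fun t ω =>
    ∑' j : ℕ, ENNReal.ofReal (c₁ ^ j * (|e (t - j - 1) ω| + |e (t - j) ω|)) with hSE
  have hZnn : ∀ (t : ℤ) (j : ℕ) (ω : Ω), 0 ≤ |e (t - j - 1) ω| + |e (t - j) ω| :=
    fun t j ω => add_nonneg (abs_nonneg _) (abs_nonneg _)
  have hSEmeas : ∀ t, Measurable (SE t) := by
    intro t
    exact Measurable.ennreal_tsum fun j => by fun_prop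
  have hSEfin : ∀ t : ℤ, ∀ᵐ ω ∂P, SE t ω < ⊤ := by
    intro t
    set m1 : ℝ≥0∞ := ∫⁻ x, ENNReal.ofReal |x| ∂(gaussianReal 0 1) with hm1def
    have hm1 : m1 < ⊤ := by
      have h := aux_gauss_moment (zero_le_one (α := ℝ))
      simpa [Real.rpow_one] using h
    have hint : ∫⁻ ω, SE t ω ∂P ≤ (1 - ENNReal.ofReal c₁)⁻¹ * (m1 + m1) := by
      rw [hSE]
      simp only
      rw [lintegral_tsum (fun j => (by fun_prop : Measurable _).aemeasurable)]
      have hterm : ∀ j : ℕ,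
          ∫⁻ ω, ENNReal.ofReal (c₁ ^ j * (|e (t - j - 1) ω| + |e (t - j) ω|)) ∂P
            ≤ ENNReal.ofReal c₁ ^ j * (m1 + m1) := by
        intro j
        have heq : ∀ ω : Ω, ENNReal.ofReal (c₁ ^ j * (|e (t - j - 1) ω| + |e (t - j) ω|))
            = ENNReal.ofReal (c₁ ^ j)
              * (ENNReal.ofReal |e (t - j - 1) ω| + ENNReal.ofReal |e (t - j) ω|) := by
          intro ω
          rw [ENNReal.ofReal_mul (pow_nonneg hc₁.le j),
            ENNReal.ofReal_add (abs_nonneg _) (abs_nonneg _)]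
        simp only [heq]
        rw [lintegral_const_mul' _ _ ENNReal.ofReal_ne_top,
          lintegral_add_left (by fun_prop)]
        have hb : ∀ s : ℤ, ∫⁻ ω, ENNReal.ofReal |e s ω| ∂P = m1 := by
          intro s
          have := hmom s 1 zero_le_one
          simpa [Real.rpow_one] using this
        rw [hb, hb, ENNReal.ofReal_pow hc₁.le]
      calc ∑' j : ℕ, ∫⁻ ω, ENNReal.ofReal (c₁ ^ j * (|e (t - j - 1) ω| + |e (t - j) ω|)) ∂P
          ≤ ∑' j : ℕ, ENNReal.ofReal c₁ ^ j * (m1 + m1) := ENNReal.tsum_le_tsum hterm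
        _ = (∑' j : ℕ, ENNReal.ofReal c₁ ^ j) * (m1 + m1) := ENNReal.tsum_mul_right
        _ = (1 - ENNReal.ofReal c₁)⁻¹ * (m1 + m1) := by rw [ENNReal.tsum_geometric]
    have hlt : ∫⁻ ω, SE t ω ∂P < ⊤ := by
      refine hint.trans_lt (ENNReal.mul_lt_top ?_ ?_)
      · rw [lt_top_iff_ne_top]
        refine ENNReal.inv_ne_top.mpr ?_
        rw [ne_eq, tsub_eq_zero_iff_le, not_le]
        exact ENNReal.ofReal_lt_one.mpr hc₁'
      · exact ENNReal.add_lt_top.mpr ⟨hm1, hm1⟩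
    exact ae_lt_top (hSEmeas t) hlt.ne
  have hgood : ∀ᵐ ω ∂P, (∀ s : ℤ, |X s ω| ≤ Real.sqrt c₃ * (|e (s - 1) ω| + |e s ω|))
      ∧ ∀ t : ℤ, SE t ω < ⊤ := hXb.and (ae_all_iff.mpr hSEfin)
  -- summability of the dominating real series, on the good set
  have hkey : ∀ ω, (∀ s : ℤ, |X s ω| ≤ Real.sqrt c₃ * (|e (s - 1) ω| + |e s ω|)) →
      (∀ t : ℤ, SE t ω < ⊤) → ∀ t : ℤ,
      Summable (fun j : ℕ => c₁ ^ j * |X (t - (j:ℤ)) ω|) := by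
    intro ω hω1 hω2 t
    have hZsum : Summable (fun j : ℕ => c₁ ^ j * (|e (t - j - 1) ω| + |e (t - j) ω|)) := by
      have h := ENNReal.summable_toReal (hω2 t).ne
      refine h.congr fun j => ?_
      exact ENNReal.toReal_ofReal (mul_nonneg (pow_nonneg hc₁.le j) (hZnn t j ω))
    refine Summable.of_nonneg_of_le
      (fun j => mul_nonneg (pow_nonneg hc₁.le j) (abs_nonneg _)) (fun j => ?_)
      (hZsum.mul_left (Real.sqrt c₃))
    calc c₁ ^ j * |X (t - (j:ℤ)) ω|
        ≤ c₁ ^ j * (Real.sqrt c₃ * (|e (t - j - 1) ω| + |e (t - j) ω|)) := by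
          have := hω1 (t - (j:ℤ))
          exact mul_le_mul_of_nonneg_left this (pow_nonneg hc₁.le j)
      _ = Real.sqrt c₃ * (c₁ ^ j * (|e (t - j - 1) ω| + |e (t - j) ω|)) := by ring
  constructor
  · filter_upwards [hgood] with ω hω t θ hθ
    refine Summable.of_nonneg_of_le (fun j => mul_nonneg (abs_nonneg _) (abs_nonneg _))
      (fun j => mul_le_mul_of_nonneg_right (hprod θ hθ t ω j) (abs_nonneg _))
      (hkey ω hω.1 hω.2 t)
  · intro d hd t
    have hd0 : (0:ℝ) ≤ d := zero_le_one.trans hd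
    set md : ℝ≥0∞ := ∫⁻ x, ENNReal.ofReal (|x| ^ d) ∂(gaussianReal 0 1) with hmddef
    have hmd : md < ⊤ := aux_gauss_moment hd0
    set K₂ : ℝ≥0∞ := ENNReal.ofReal (Real.sqrt c₂)⁻¹ with hK2
    set K₃ : ℝ≥0∞ := ENNReal.ofReal (Real.sqrt c₃) with hK3
    -- pointwise sup bound
    have hsup : ∀ᵐ ω ∂P, (⨆ θ ∈ tmaTheta c₁ c₂ c₃, ENNReal.ofReal (|tmaEps X u θ t ω| ^ d))
        ≤ (K₂ * (K₃ * SE t ω)) ^ d := by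
      filter_upwards [hgood] with ω hω
      obtain ⟨hω1, hω2⟩ := hω
      have hXsum : Summable (fun j : ℕ => c₁ ^ j * |X (t - (j:ℤ)) ω|) := hkey ω hω1 hω2 t
      set T : ℝ := ∑' j : ℕ, c₁ ^ j * |X (t - (j:ℤ)) ω| with hTdef
      have hoT : ENNReal.ofReal T ≤ K₃ * SE t ω := by
        rw [hTdef, ENNReal.ofReal_tsum_of_nonneg
          (fun j => mul_nonneg (pow_nonneg hc₁.le j) (abs_nonneg _)) hXsum, hSE]
        simp only
        rw [← ENNReal.tsum_mul_left]
        refine ENNReal.tsum_le_tsum fun j => ?_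
        rw [← ENNReal.ofReal_mul (Real.sqrt_nonneg c₃)]
        refine ENNReal.ofReal_le_ofReal ?_
        calc c₁ ^ j * |X (t - (j:ℤ)) ω|
            ≤ c₁ ^ j * (Real.sqrt c₃ * (|e (t - j - 1) ω| + |e (t - j) ω|)) :=
              mul_le_mul_of_nonneg_left (hω1 (t - (j:ℤ))) (pow_nonneg hc₁.le j)
          _ = Real.sqrt c₃ * (c₁ ^ j * (|e (t - j - 1) ω| + |e (t - j) ω|)) := by ring
      refine iSup₂_le fun θ hθ => ?_
      obtain ⟨h1, h2, h3, h4⟩ := hθ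
      have hfnorm : ∀ j : ℕ, ‖(∏ i ∈ Finset.Icc 1 j, tmaA X u θ (t - (i:ℤ)) ω)
          * X (t - (j:ℤ)) ω‖ ≤ c₁ ^ j * |X (t - (j:ℤ)) ω| := by
        intro j
        rw [Real.norm_eq_abs, abs_mul]
        exact mul_le_mul_of_nonneg_right (hprod θ ⟨h1, h2, h3, h4⟩ t ω j) (abs_nonneg _)
      have hfsum : Summable (fun j : ℕ => ‖(∏ i ∈ Finset.Icc 1 j, tmaA X u θ (t - (i:ℤ)) ω)
          * X (t - (j:ℤ)) ω‖) :=
        Summable.of_nonneg_of_le (fun j => norm_nonneg _) hfnorm hXsum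
      have htsum : |∑' j : ℕ, (∏ i ∈ Finset.Icc 1 j, tmaA X u θ (t - (i:ℤ)) ω)
          * X (t - (j:ℤ)) ω| ≤ T := by
        rw [← Real.norm_eq_abs]
        exact (norm_tsum_le_tsum_norm hfsum).trans (Summable.tsum_le_tsum hfnorm hfsum hXsum)
      have hTnn : (0:ℝ) ≤ T :=
        tsum_nonneg fun j => mul_nonneg (pow_nonneg hc₁.le j) (abs_nonneg _)
      have heps : |tmaEps X u θ t ω| ≤ (Real.sqrt c₂)⁻¹ * T := by
        simp only [tmaEps]
        rw [abs_mul, abs_of_nonneg (inv_nonneg.mpr (Real.sqrt_nonneg _))]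
        refine mul_le_mul ?_ htsum (abs_nonneg _) (inv_nonneg.mpr (Real.sqrt_nonneg _))
        exact inv_anti₀ (Real.sqrt_pos.mpr hc₂) (Real.sqrt_le_sqrt h3)
      calc ENNReal.ofReal (|tmaEps X u θ t ω| ^ d)
          ≤ ENNReal.ofReal (((Real.sqrt c₂)⁻¹ * T) ^ d) :=
            ENNReal.ofReal_le_ofReal (Real.rpow_le_rpow (abs_nonneg _) heps hd0)
        _ = ENNReal.ofReal ((Real.sqrt c₂)⁻¹ * T) ^ d :=
            (ENNReal.ofReal_rpow_of_nonneg (by positivity) hd0).symm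
        _ = (K₂ * ENNReal.ofReal T) ^ d := by
            rw [ENNReal.ofReal_mul (inv_nonneg.mpr (Real.sqrt_nonneg _))]
        _ ≤ (K₂ * (K₃ * SE t ω)) ^ d :=
            ENNReal.rpow_le_rpow (mul_le_mul_right hoT _) hd0
    -- reduce to finiteness of ∫ SE^d
    have hKne : (K₂ * K₃) ^ d ≠ ⊤ :=
      ENNReal.rpow_ne_top_of_nonneg hd0
        (ENNReal.mul_ne_top ENNReal.ofReal_ne_top ENNReal.ofReal_ne_top)
    have hstep1 : ∫⁻ ω, ⨆ θ ∈ tmaTheta c₁ c₂ c₃, ENNReal.ofReal (|tmaEps X u θ t ω| ^ d) ∂P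
        ≤ (K₂ * K₃) ^ d * ∫⁻ ω, SE t ω ^ d ∂P := by
      refine (lintegral_mono_ae hsup).trans ?_
      have hmm : ∀ ω, (K₂ * (K₃ * SE t ω)) ^ d = (K₂ * K₃) ^ d * SE t ω ^ d := by
        intro ω
        rw [← mul_assoc, ENNReal.mul_rpow_of_nonneg _ _ hd0]
      simp only [hmm]
      rw [lintegral_const_mul' _ _ hKne]
    refine hstep1.trans_lt (ENNReal.mul_lt_top hKne.lt_top ?_)
    -- core estimate via Jensen's inequality
    set r : ℝ := Real.sqrt c₁ with hrdef
    have hr0 : 0 < r := Real.sqrt_pos.mpr hc₁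
    have hr1 : r < 1 := by
      rw [hrdef, ← Real.sqrt_one]
      exact Real.sqrt_lt_sqrt hc₁.le hc₁'
    have hβpos : ∀ j : ℕ, 0 < (1 - r) * r ^ j :=
      fun j => mul_pos (by linarith) (pow_pos hr0 j)
    set w : ℕ → ℝ≥0∞ := fun j => ENNReal.ofReal ((1 - r) * r ^ j) with hwdef
    have hw0 : ∀ j, w j ≠ 0 := fun j => (ENNReal.ofReal_pos.mpr (hβpos j)).ne'
    have hwt : ∀ j, w j ≠ ⊤ := fun _ => ENNReal.ofReal_ne_top
    have h1r : (1 : ℝ≥0∞) - ENNReal.ofReal r = ENNReal.ofReal (1 - r) := by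
      rw [← ENNReal.ofReal_one, ← ENNReal.ofReal_sub _ hr0.le]
    have hw1 : ∑' j, w j = 1 := by
      simp only [hwdef]
      have hsplit : ∀ j : ℕ, ENNReal.ofReal ((1 - r) * r ^ j)
          = ENNReal.ofReal (1 - r) * ENNReal.ofReal r ^ j := by
        intro j
        rw [ENNReal.ofReal_mul (by linarith), ENNReal.ofReal_pow hr0.le]
      simp only [hsplit]
      rw [ENNReal.tsum_mul_left, ENNReal.tsum_geometric, h1r,
        ENNReal.mul_inv_cancel ((ENNReal.ofReal_pos.mpr (by linarith)).ne')
          ENNReal.ofReal_ne_top]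
    set a : ℕ → Ω → ℝ≥0∞ := fun j ω =>
      ENNReal.ofReal (c₁ ^ j * (|e (t - j - 1) ω| + |e (t - j) ω|)) with hadef
    have hJ : ∀ ω, SE t ω ^ d ≤ ∑' j, w j * (a j ω * (w j)⁻¹) ^ d := by
      intro ω
      have hrw : SE t ω = ∑' j, w j * (a j ω * (w j)⁻¹) := by
        rw [hSE]
        simp only
        refine tsum_congr fun j => ?_
        calc ENNReal.ofReal (c₁ ^ j * (|e (t - j - 1) ω| + |e (t - j) ω|))
            = a j ω := by rw [hadef]
          _ = (w j * (w j)⁻¹) * a j ω := by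
              rw [ENNReal.mul_inv_cancel (hw0 j) (hwt j), one_mul]
          _ = w j * (a j ω * (w j)⁻¹) := by ring
      rw [hrw]
      exact aux_jensen_tsum w _ hw1.le hd
    -- computation of each term
    set cfac : ℕ → ℝ≥0∞ := fun j => ENNReal.ofReal
      ((((1 - r) * r ^ j) * ((((1 - r) * r ^ j) ^ d)⁻¹)) * ((c₁ ^ j) ^ d)) with hcdef
    have hterm : ∀ (j : ℕ) (ω : Ω), w j * (a j ω * (w j)⁻¹) ^ d
        = cfac j * ENNReal.ofReal ((|e (t - j - 1) ω| + |e (t - j) ω|) ^ d) := by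
      intro j ω
      rw [ENNReal.mul_rpow_of_nonneg _ _ hd0, ENNReal.inv_rpow]
      have ha : a j ω ^ d = ENNReal.ofReal ((c₁ ^ j) ^ d)
          * ENNReal.ofReal ((|e (t - j - 1) ω| + |e (t - j) ω|) ^ d) := by
        simp only [hadef]
        rw [ENNReal.ofReal_rpow_of_nonneg
            (mul_nonneg (pow_nonneg hc₁.le j) (hZnn t j ω)) hd0,
          Real.mul_rpow (pow_nonneg hc₁.le j) (hZnn t j ω),
          ENNReal.ofReal_mul (Real.rpow_nonneg (pow_nonneg hc₁.le j) d)]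
      have hwd : (w j ^ d)⁻¹ = ENNReal.ofReal ((((1 - r) * r ^ j) ^ d)⁻¹) := by
        simp only [hwdef]
        rw [ENNReal.ofReal_rpow_of_nonneg (hβpos j).le hd0,
          ← ENNReal.ofReal_inv_of_pos (Real.rpow_pos_of_pos (hβpos j) d)]
      rw [ha, hwd]
      simp only [hwdef, hcdef]
      rw [ENNReal.ofReal_mul (mul_nonneg (hβpos j).le
          (inv_nonneg.mpr (Real.rpow_nonneg (hβpos j).le d))),
        ENNReal.ofReal_mul (hβpos j).le]
      ring
    -- geometric bound for cfac
    have hcomm : ∀ j : ℕ, ((r ^ d) ^ j : ℝ) = (r ^ j) ^ d := by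
      intro j
      rw [← Real.rpow_natCast (r ^ d) j, ← Real.rpow_natCast r j,
        ← Real.rpow_mul hr0.le, ← Real.rpow_mul hr0.le, mul_comm]
    have hkeyr : ∀ s : ℝ, 0 < s →
        (((1 - r) * s) * ((((1 - r) * s) ^ d)⁻¹)) * ((s * s) ^ d)
          = ((1 - r) * (((1 - r) ^ d)⁻¹)) * (s * s ^ d) := by
      intro s hs
      rw [Real.mul_rpow (by linarith) hs.le, Real.mul_rpow hs.le hs.le]
      have h1 : ((1 - r) : ℝ) ^ d ≠ 0 := (Real.rpow_pos_of_pos (by linarith) d).ne'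
      have h2 : (s : ℝ) ^ d ≠ 0 := (Real.rpow_pos_of_pos hs d).ne'
      field_simp
    have hcfac : ∀ j : ℕ, cfac j
        = ENNReal.ofReal ((1 - r) * (((1 - r) ^ d)⁻¹)) * ENNReal.ofReal (r * r ^ d) ^ j := by
      intro j
      simp only [hcdef]
      have hc1j : (c₁ : ℝ) ^ j = (r ^ j) * (r ^ j) := by
        have hc1r : c₁ = r * r := (Real.mul_self_sqrt hc₁.le).symm
        rw [hc1r, mul_pow]
      rw [hc1j, hkeyr (r ^ j) (pow_pos hr0 j)]
      have hpows : (r : ℝ) ^ j * (r ^ j) ^ d = (r * r ^ d) ^ j := by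
        rw [← hcomm j, ← mul_pow]
      rw [hpows, ENNReal.ofReal_mul (mul_nonneg (by linarith : (0:ℝ) ≤ 1 - r)
          (inv_nonneg.mpr (Real.rpow_nonneg (by linarith) d))),
        ENNReal.ofReal_pow (mul_nonneg hr0.le (Real.rpow_nonneg hr0.le d))]
    have hρ1 : ENNReal.ofReal (r * r ^ d) < 1 := by
      refine ENNReal.ofReal_lt_one.mpr ?_
      have hrr : r * r ^ d = r ^ (1 + d) := by rw [Real.rpow_add hr0, Real.rpow_one]
      rw [hrr]
      exact Real.rpow_lt_one hr0.le hr1 (by linarith)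
    -- the moment bound for each term
    have hmdint : ∀ j : ℕ, ∫⁻ ω, ENNReal.ofReal ((|e (t - j - 1) ω| + |e (t - j) ω|) ^ d) ∂P
        ≤ ENNReal.ofReal (2 ^ d) * (md + md) := by
      intro j
      have hpt : ∀ ω, ENNReal.ofReal ((|e (t - j - 1) ω| + |e (t - j) ω|) ^ d)
          ≤ ENNReal.ofReal (2 ^ d) * (ENNReal.ofReal (|e (t - j - 1) ω| ^ d)
            + ENNReal.ofReal (|e (t - j) ω| ^ d)) := by
        intro ω
        rw [← ENNReal.ofReal_add (Real.rpow_nonneg (abs_nonneg _) d)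
          (Real.rpow_nonneg (abs_nonneg _) d),
          ← ENNReal.ofReal_mul (Real.rpow_nonneg (by norm_num) d)]
        exact ENNReal.ofReal_le_ofReal (aux_add_rpow (abs_nonneg _) (abs_nonneg _) hd0)
      refine (lintegral_mono hpt).trans ?_
      rw [lintegral_const_mul' _ _ ENNReal.ofReal_ne_top, lintegral_add_left (by fun_prop),
        hmom _ d hd0, hmom _ d hd0]
    -- assemble
    calc ∫⁻ ω, SE t ω ^ d ∂P
        ≤ ∫⁻ ω, ∑' j, w j * (a j ω * (w j)⁻¹) ^ d ∂P := lintegral_mono hJ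
      _ = ∫⁻ ω, ∑' j, cfac j
            * ENNReal.ofReal ((|e (t - j - 1) ω| + |e (t - j) ω|) ^ d) ∂P := by
          simp only [hterm]
      _ = ∑' j, ∫⁻ ω, cfac j
            * ENNReal.ofReal ((|e (t - j - 1) ω| + |e (t - j) ω|) ^ d) ∂P :=
          lintegral_tsum fun j => (by fun_prop : Measurable _).aemeasurable
      _ = ∑' j, cfac j
            * ∫⁻ ω, ENNReal.ofReal ((|e (t - j - 1) ω| + |e (t - j) ω|) ^ d) ∂P :=
          tsum_congr fun j => lintegral_const_mul' _ _ ENNReal.ofReal_ne_top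
      _ ≤ ∑' j, cfac j * (ENNReal.ofReal (2 ^ d) * (md + md)) :=
          ENNReal.tsum_le_tsum fun j => mul_le_mul_right (hmdint j) _
      _ = (∑' j, cfac j) * (ENNReal.ofReal (2 ^ d) * (md + md)) := ENNReal.tsum_mul_right
      _ < ⊤ := by
          refine ENNReal.mul_lt_top ?_
            (ENNReal.mul_lt_top ENNReal.ofReal_lt_top (ENNReal.add_lt_top.mpr ⟨hmd, hmd⟩))
          simp only [hcfac]
          rw [ENNReal.tsum_mul_left, ENNReal.tsum_geometric]
          refine ENNReal.mul_lt_top ENNReal.ofReal_lt_top ?_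
          rw [lt_top_iff_ne_top]
          refine ENNReal.inv_ne_top.mpr ?_
          rw [ne_eq, tsub_eq_zero_iff_le, not_le]
          exact hρ1
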